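/- Let m > 0 and define p(r) = 48 m^3 - 16 m^2 r - r^{3/2} √(r^3 + 2 m r^2 + 4 m^2 r + 72 m^3) for r > 0. Then p(r̄) = 0 where r̄ is the unique positive root of the cubic 32 m^3 - 16 m^2 r - r^3; that is, the positive root of p coincides with the real root of q(r) = (32 m^3 - 16 m^2 r - r^3) r. -/
import Mathlib


open Real

/-- The positive root of `p` coincides with the unique positive root of the cubic
`32 m^3 - 16 m^2 r - r^3` (the real root of `q r = (32 m^3 - 16 m^2 r - r^3) r`). -/
theorem stmt_1 (m : ℝ) (hm : 0 < m)
    (p : ℝ → ℝ)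
    (hp : ∀ r, p r = 48 * m ^ 3 - 16 * m ^ 2 * r -
      r ^ ((3 : ℝ) / 2) * Real.sqrt (r ^ 3 + 2 * m * r ^ 2 + 4 * m ^ 2 * r + 72 * m ^ 3))
    (rbar : ℝ) (hpos : 0 < rbar)
    (hroot : 32 * m ^ 3 - 16 * m ^ 2 * rbar - rbar ^ 3 = 0) :
    p rbar = 0 := by
  have hr : (0:ℝ) ≤ rbar := hpos.le
  have hS : (0:ℝ) ≤ rbar ^ 3 + 2 * m * rbar ^ 2 + 4 * m ^ 2 * rbar + 72 * m ^ 3 := by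
    positivity
  have hpow : rbar ^ ((3 : ℝ) / 2) = Real.sqrt (rbar ^ 3) := by
    rw [Real.sqrt_eq_rpow, ← Real.rpow_natCast rbar 3, ← Real.rpow_mul hr]
    norm_num
  have hnn : (0:ℝ) ≤ 48 * m ^ 3 - 16 * m ^ 2 * rbar := by
    nlinarith [pow_pos hpos 3, pow_pos hm 3]
  have hprod : rbar ^ 3 * (rbar ^ 3 + 2 * m * rbar ^ 2 + 4 * m ^ 2 * rbar + 72 * m ^ 3)
      = (48 * m ^ 3 - 16 * m ^ 2 * rbar) ^ 2 := by
    linear_combination (-(rbar ^ 3 + 32 * m ^ 3 - 16 * m ^ 2 * rbar + 2 * m * rbar ^ 2 + 4 * m ^ 2 * rbar + 72 * m ^ 3) + 32 * m ^ 3) * hroot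
  rw [hp, hpow, ← Real.sqrt_mul (by positivity) _, hprod, Real.sqrt_sq hnn]
  ring
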